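/- Let A be a unital C*-algebra, L a partially-defined L-seminorm, and for each maximal commutative unital C*-subalgebra A_α define Diam(S(A_α)) := sup of d_{L,α} over pairs of states of A_α. Then sup_α Diam(S(A_α)) = Diam(S(A)) := sup of d_L over pairs of states of A, where d_L(μ,ν) = sup{ |μ(f) − ν(f)| : f ∈ A^{sa}, L(f) ≤ 1 }. -/

import Mathlib

open scoped ComplexOrder NNReal ENNReal

/-- A commutative unital C*-subalgebra: a closed star-subalgebra with commutative
multiplication. -/
def IsCommClosedStarSubalg {A : Type*} [NormedRing A] [StarRing A]
    [NormedAlgebra ℂ A] [StarModule ℂ A] (S : StarSubalgebra ℂ A) : Prop :=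
  IsClosed (S : Set A) ∧ ∀ x ∈ S, ∀ y ∈ S, x * y = y * x

/-- A maximal commutative unital C*-subalgebra. -/
def IsMaxCommClosedStarSubalg {A : Type*} [NormedRing A] [StarRing A]
    [NormedAlgebra ℂ A] [StarModule ℂ A] (S : StarSubalgebra ℂ A) : Prop :=
  IsCommClosedStarSubalg S ∧
    ∀ S' : StarSubalgebra ℂ A, IsCommClosedStarSubalg S' → S ≤ S' → S' = S

/-- A state on the unital C*-subalgebra `S`, regarded as a `ℂ`-valued function on `A`
(only its values on `S` matter): linear on `S`, positive on `S`, and unital. -/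
def IsStateOn {A : Type*} [NormedRing A] [StarRing A] [CStarRing A]
    [NormedAlgebra ℂ A] [StarModule ℂ A] (S : StarSubalgebra ℂ A) (φ : A → ℂ) : Prop :=
  (∀ x ∈ S, ∀ y ∈ S, φ (x + y) = φ x + φ y) ∧
  (∀ c : ℂ, ∀ x ∈ S, φ (c • x) = c * φ x) ∧
  (∀ x ∈ S, 0 ≤ φ (star x * x)) ∧ φ 1 = 1

/-- The spectral distance relative to a star-subalgebra `S`:
`d_{L,S}(μ,ν) = sup { |μ f − ν f| : f ∈ S self-adjoint, L f ≤ 1 }`. -/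
noncomputable def spectralDistOn {A : Type*} [NormedRing A] [StarRing A]
    [NormedAlgebra ℂ A] [StarModule ℂ A] (L : A → ℝ≥0∞) (S : StarSubalgebra ℂ A)
    (μ ν : A → ℂ) : ℝ≥0∞ :=
  ⨆ f : {f : A // f ∈ S ∧ IsSelfAdjoint f ∧ L f ≤ 1}, (‖μ f.1 - ν f.1‖₊ : ℝ≥0∞)

section Aux

variable {A : Type*} [CStarAlgebra A]

/-! ### Zorn's lemma: maximal commutative closed star subalgebras -/

/-- Upper bound of a nonempty chain of star subalgebras. -/
def chainUB (C : Set (StarSubalgebra ℂ A)) (hC : IsChain (· ≤ ·) C) (S₀ : StarSubalgebra ℂ A)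
    (hS₀ : S₀ ∈ C) : StarSubalgebra ℂ A where
  carrier := {x | ∃ S ∈ C, x ∈ S}
  mul_mem' := by
    rintro a b ⟨S, hS, ha⟩ ⟨T, hT, hb⟩
    rcases hC.total hS hT with h | h
    · exact ⟨T, hT, mul_mem (h ha) hb⟩
    · exact ⟨S, hS, mul_mem ha (h hb)⟩
  add_mem' := by
    rintro a b ⟨S, hS, ha⟩ ⟨T, hT, hb⟩
    rcases hC.total hS hT with h | h
    · exact ⟨T, hT, add_mem (h ha) hb⟩
    · exact ⟨S, hS, add_mem ha (h hb)⟩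
  algebraMap_mem' := fun r => ⟨S₀, hS₀, algebraMap_mem S₀ r⟩
  star_mem' := by
    rintro a ⟨S, hS, ha⟩
    exact ⟨S, hS, star_mem ha⟩

theorem le_chainUB (C : Set (StarSubalgebra ℂ A)) (hC : IsChain (· ≤ ·) C)
    (S₀ : StarSubalgebra ℂ A) (hS₀ : S₀ ∈ C) {S : StarSubalgebra ℂ A} (hS : S ∈ C) :
    S ≤ chainUB C hC S₀ hS₀ := fun x hx => ⟨S, hS, hx⟩

theorem exists_maxcomm (f : A) (hf : IsSelfAdjoint f) :
    ∃ S : StarSubalgebra ℂ A, IsMaxCommClosedStarSubalg S ∧ f ∈ S := by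
  classical
  set T : Set (StarSubalgebra ℂ A) :=
    {S | (∀ x ∈ S, ∀ y ∈ S, x * y = y * x) ∧ f ∈ S} with hT
  haveI : IsStarNormal f := hf.isStarNormal
  have hbase : StarAlgebra.elemental ℂ f ∈ T := by
    refine ⟨fun x hx y hy => ?_, StarAlgebra.elemental.self_mem ℂ f⟩
    have := mul_comm (⟨x, hx⟩ : StarAlgebra.elemental ℂ f) ⟨y, hy⟩
    exact congrArg Subtype.val this
  obtain ⟨M, hM, hMmax⟩ := zorn_le_nonempty₀ T (fun c hcT hc y hy => by
    refine ⟨chainUB c hc y hy, ⟨?_, le_chainUB c hc y hy hy (hcT hy).2⟩,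
      fun z hz => le_chainUB c hc y hy hz⟩
    rintro a ⟨S, hS, ha⟩ b ⟨S', hS', hb⟩
    rcases hc.total hS hS' with h | h
    · exact (hcT hS').1 a (h ha) b hb
    · exact (hcT hS).1 a ha b (h hb)) (StarAlgebra.elemental ℂ f) hbase
  have hcomm : ∀ x ∈ M, ∀ y ∈ M, x * y = y * x := hMmax.prop.1
  have hfM : f ∈ M := hMmax.prop.2
  have step1 : ∀ y ∈ (M : Set A), ∀ x ∈ closure (M : Set A), x * y = y * x := by
    intro y hy x hx
    have hcl : IsClosed {z : A | z * y = y * z} :=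
      isClosed_eq (continuous_id.mul continuous_const) (continuous_const.mul continuous_id)
    exact hcl.closure_subset_iff.mpr (fun z hz => hcomm z hz y hy) hx
  have hclos_comm : ∀ x ∈ closure (M : Set A), ∀ y ∈ closure (M : Set A), x * y = y * x := by
    intro x hx y hy
    have hcl : IsClosed {z : A | x * z = z * x} :=
      isClosed_eq (continuous_const.mul continuous_id) (continuous_id.mul continuous_const)
    exact hcl.closure_subset_iff.mpr (fun z hz => step1 z hz x hx) hy
  have hMT : M.topologicalClosure ∈ T := by
    refine ⟨fun x hx y hy => ?_, M.le_topologicalClosure hfM⟩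
    exact hclos_comm x hx y hy
  have hle : M.topologicalClosure ≤ M := hMmax.2 hMT M.le_topologicalClosure
  have heq : M.topologicalClosure = M := le_antisymm hle M.le_topologicalClosure
  have hMclosed : IsClosed (M : Set A) := by
    rw [← heq]; exact M.isClosed_topologicalClosure
  refine ⟨M, ⟨⟨hMclosed, hcomm⟩, fun S' hS' hle' => ?_⟩, hfM⟩
  exact le_antisymm (hMmax.2 ⟨hS'.2, hle' hfM⟩ hle') hle'

variable [Nontrivial A]

/-! ### Square roots via the continuous functional calculus -/

lemma sqrt_lemma (b : A) (hb : IsSelfAdjoint b) :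
    ∃ y : A, star y * y = algebraMap ℝ A ‖b‖ - b := by
  set f : ℝ → ℝ := fun r => Real.sqrt (‖b‖ - r) with hfdef
  have hfc : Continuous f := Real.continuous_sqrt.comp (continuous_const.sub continuous_id)
  refine ⟨cfc f b, ?_⟩
  have hy : IsSelfAdjoint (cfc f b) := cfc_predicate f b
  rw [hy.star_eq, ← cfc_mul f f b hfc.continuousOn hfc.continuousOn]
  have : Set.EqOn (fun r => f r * f r) (fun r => ‖b‖ - r) (spectrum ℝ b) := by
    intro r hr
    have : r ≤ ‖b‖ := (Real.le_norm_self r).trans (spectrum.norm_le_norm_of_mem hr)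
    simp only [hfdef]
    exact Real.mul_self_sqrt (by linarith)
  rw [cfc_congr this]
  rw [cfc_sub (fun _ => ‖b‖) (fun r => r) b (continuousOn_const) (continuousOn_id)]
  rw [cfc_const ‖b‖ b, cfc_id' ℝ b]

lemma norm_smul_one_sub_le (x : A) :
    ‖algebraMap ℝ A ‖star x * x‖ - star x * x‖ ≤ ‖star x * x‖ := by
  set b := star x * x with hbdef
  have hb : IsSelfAdjoint b := IsSelfAdjoint.star_mul_self x
  have key : algebraMap ℝ A ‖b‖ - b = cfc (fun t : ℝ => ‖b‖ - t) b := by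
    rw [cfc_sub (fun _ => ‖b‖) (fun r => r) b (continuousOn_const) (continuousOn_id)]
    rw [cfc_const ‖b‖ b, cfc_id' ℝ b]
  rw [key]
  refine norm_cfc_le (norm_nonneg b) (fun t ht => ?_)
  have h1 : 0 ≤ t := spectrum_star_mul_self_nonneg t ht
  have h2 : t ≤ ‖b‖ := (Real.le_norm_self t).trans (spectrum.norm_le_norm_of_mem ht)
  rw [Real.norm_eq_abs, abs_of_nonneg (by linarith)]
  linarith

/-! ### Positive unital functionals are contractive -/

lemma expand_aux (z : A) (c d : ℂ) :
    (star z + d • 1) * (z + c • 1)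
      = star z * z + c • star z + d • z + (d * c) • (1 : A) := by
  simp only [mul_add, add_mul, smul_mul_assoc, mul_smul_comm, smul_smul, mul_one, one_mul,
    smul_add]
  rw [mul_comm c d]
  abel

section state
variable (ℓ : A →ₗ[ℂ] ℂ) (hpos : ∀ z : A, 0 ≤ ℓ (star z * z)) (hone : ℓ 1 = 1)

include hpos hone

lemma state_conj : ∀ z : A, ℓ (star z) = starRingEnd ℂ (ℓ z) := by
  intro z
  have key : ∀ w : A, (ℓ (star w * w)).im = 0 := fun w => ((Complex.nonneg_iff).mp (hpos w)).2.symm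
  have e1 : star (z + (1:ℂ) • 1) * (z + (1:ℂ) • 1)
      = star z * z + (1:ℂ) • star z + (1:ℂ) • z + ((1:ℂ) * 1) • (1:A) := by
    rw [← expand_aux z 1 1]
    congr 1
    simp [star_smul]
  have e2 : star (z + Complex.I • 1) * (z + Complex.I • 1)
      = star z * z + Complex.I • star z + (-Complex.I) • z
          + ((-Complex.I) * Complex.I) • (1:A) := by
    rw [← expand_aux z Complex.I (-Complex.I)]
    congr 1
    simp [star_smul, Complex.star_def, Complex.conj_I]
  have h1 := key (z + (1:ℂ) • 1)
  have h2 := key (z + Complex.I • 1)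
  rw [e1] at h1
  rw [e2] at h2
  simp only [map_add, map_smul, smul_eq_mul, one_mul, mul_one, hone, neg_mul, neg_smul,
    Complex.I_mul_I, neg_neg, map_neg, Complex.neg_im] at h1 h2
  have h0 := key z
  simp only [Complex.add_im, Complex.neg_im, Complex.mul_im, Complex.I_re, Complex.I_im,
    Complex.one_im, Complex.one_re, h0] at h1 h2
  apply Complex.ext
  · simp only [Complex.conj_re]; nlinarith [h2]
  · simp only [Complex.conj_im]; nlinarith [h1]

lemma state_re_le (z : A) : (ℓ (star z * z)).re ≤ ‖z‖ ^ 2 := by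
  set b := star z * z with hbdef
  have hb : IsSelfAdjoint b := IsSelfAdjoint.star_mul_self z
  obtain ⟨y, hy⟩ := sqrt_lemma b hb
  have h := hpos y
  rw [hy] at h
  have halg : algebraMap ℝ A ‖b‖ = (‖b‖ : ℂ) • (1 : A) := by
    rw [Algebra.algebraMap_eq_smul_one]
    norm_cast
  rw [halg, map_sub, map_smul, hone, smul_eq_mul, mul_one] at h
  rw [Complex.le_def] at h
  simp only [Complex.sub_re, Complex.ofReal_re, Complex.zero_re] at h
  have hb2 : ‖b‖ ≤ ‖z‖ ^ 2 := by
    calc ‖b‖ ≤ ‖star z‖ * ‖z‖ := norm_mul_le _ _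
    _ = ‖z‖ ^ 2 := by rw [norm_star]; ring
  linarith [h.1]

lemma state_norm_le (z : A) : ‖ℓ z‖ ≤ ‖z‖ := by
  have hconj := state_conj ℓ hpos hone
  set c : ℂ := -ℓ z with hcdef
  have e : star (z + c • 1) * (z + c • 1)
      = star z * z + c • star z + (starRingEnd ℂ c) • z + ((starRingEnd ℂ c) * c) • (1:A) := by
    rw [← expand_aux z c (starRingEnd ℂ c)]
    congr 1
    simp [star_smul, Complex.star_def]
  have h := hpos (z + c • 1)
  rw [e] at h
  simp only [map_add, map_smul, smul_eq_mul, hone, mul_one, hconj z] at h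
  have key : (0:ℂ) ≤ ℓ (star z * z) - (‖ℓ z‖:ℂ) ^ 2 := by
    convert h using 1
    rw [hcdef]
    simp only [map_neg, mul_neg, neg_mul, neg_neg]
    rw [Complex.conj_mul', Complex.mul_conj']
    ring
  rw [Complex.le_def] at key
  simp only [Complex.sub_re, Complex.zero_re] at key
  have h1 : ‖ℓ z‖ ^ 2 ≤ (ℓ (star z * z)).re := by
    have := key.1
    rw [show ((((‖ℓ z‖:ℂ)) ^ 2).re) = ‖ℓ z‖ ^ 2 by
      rw [← Complex.ofReal_pow, Complex.ofReal_re]] at this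
    linarith
  have h2 := state_re_le ℓ hpos hone z
  nlinarith [norm_nonneg (ℓ z), norm_nonneg z]

end state

/-! ### Norm-one unital functionals are positive -/

lemma cl_real (g : A →L[ℂ] ℂ) (hg : ‖g‖ ≤ 1) (hg1 : g 1 = 1) (a : A) (ha : IsSelfAdjoint a) :
    (g a).im = 0 := by
  have key : ∀ t : ℝ, (g a).im ^ 2 + 2 * t * (g a).im ≤ ‖a‖ ^ 2 := by
    intro t
    set c : ℂ := (t : ℂ) * Complex.I with hcdef
    set u : A := a + c • 1 with hudef
    have hstar : star u = a + (-c) • 1 := by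
      simp [hudef, star_smul, ha.star_eq, Complex.star_def, hcdef, Complex.conj_ofReal]
    have hprod : u * star u = a * a + (t ^ 2 : ℂ) • (1 : A) := by
      rw [hudef, hstar]
      simp only [mul_add, add_mul, smul_mul_assoc, mul_smul_comm, smul_smul, mul_one, one_mul,
        smul_add]
      have hcc : -c * c = ((t : ℂ)) ^ 2 := by
        rw [hcdef]; linear_combination (-(t:ℂ)^2) * Complex.I_mul_I
      rw [hcc]
      module
    have hnorm : ‖u‖ ^ 2 ≤ ‖a‖ ^ 2 + t ^ 2 := by
      have h1 : ‖u‖ ^ 2 = ‖u * star u‖ := by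
        rw [CStarRing.norm_self_mul_star]; ring
      rw [h1, hprod]
      calc ‖a * a + (t ^ 2 : ℂ) • (1 : A)‖ ≤ ‖a * a‖ + ‖(t ^ 2 : ℂ) • (1 : A)‖ := norm_add_le _ _
        _ ≤ ‖a‖ ^ 2 + t ^ 2 := by
            gcongr
            · calc ‖a * a‖ ≤ ‖a‖ * ‖a‖ := norm_mul_le _ _
                _ = ‖a‖ ^ 2 := by ring
            · rw [norm_smul, norm_one, mul_one, norm_pow]
              have : ‖((t:ℝ) : ℂ)‖ = |t| := by rw [Complex.norm_real, Real.norm_eq_abs]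
              rw [this, sq_abs]
    have hgu : g u = g a + c := by
      rw [hudef, map_add, map_smul, hg1, smul_eq_mul, mul_one]
    have hb : ‖g u‖ ≤ ‖u‖ := by
      calc ‖g u‖ ≤ ‖g‖ * ‖u‖ := g.le_opNorm u
        _ ≤ 1 * ‖u‖ := by gcongr
        _ = ‖u‖ := one_mul _
    have : ‖g a + c‖ ^ 2 ≤ ‖a‖ ^ 2 + t ^ 2 := by
      rw [← hgu]
      calc ‖g u‖ ^ 2 ≤ ‖u‖ ^ 2 := by gcongr
        _ ≤ _ := hnorm
    rw [← Complex.normSq_eq_norm_sq] at this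
    simp only [Complex.normSq_apply, Complex.add_re, Complex.add_im, hcdef, Complex.mul_re,
      Complex.mul_im, Complex.I_re, Complex.I_im, Complex.ofReal_re, Complex.ofReal_im] at this
    nlinarith [sq_nonneg ((g a).re), this]
  by_contra h
  have h1 := key ((‖a‖ ^ 2 + 1) / (2 * (g a).im))
  have ht : 2 * ((‖a‖ ^ 2 + 1) / (2 * (g a).im)) * (g a).im = ‖a‖ ^ 2 + 1 := by
    field_simp
  rw [ht] at h1
  nlinarith [sq_nonneg ((g a).im)]

lemma cl_pos (g : A →L[ℂ] ℂ) (hg : ‖g‖ ≤ 1) (hg1 : g 1 = 1) (x : A) :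
    0 ≤ g (star x * x) := by
  set b := star x * x with hbdef
  have hb : IsSelfAdjoint b := IsSelfAdjoint.star_mul_self x
  have him : (g b).im = 0 := cl_real g hg hg1 b hb
  have halg : algebraMap ℝ A ‖b‖ = (‖b‖ : ℂ) • (1 : A) := by
    rw [Algebra.algebraMap_eq_smul_one]; norm_cast
  have hgv : g (algebraMap ℝ A ‖b‖ - b) = (‖b‖ : ℂ) - g b := by
    rw [halg, map_sub, map_smul, hg1, smul_eq_mul, mul_one]
  have hbound : ‖g (algebraMap ℝ A ‖b‖ - b)‖ ≤ ‖b‖ := by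
    calc ‖g (algebraMap ℝ A ‖b‖ - b)‖ ≤ ‖g‖ * ‖algebraMap ℝ A ‖b‖ - b‖ := g.le_opNorm _
      _ ≤ 1 * ‖b‖ := by
          have := norm_smul_one_sub_le x
          rw [← hbdef] at this
          exact mul_le_mul hg this (norm_nonneg _) zero_le_one
      _ = ‖b‖ := one_mul _
  rw [hgv] at hbound
  have hre : |‖b‖ - (g b).re| ≤ ‖b‖ := by
    have h1 : |((‖b‖ : ℂ) - g b).re| ≤ ‖(‖b‖ : ℂ) - g b‖ := Complex.abs_re_le_norm _
    simp only [Complex.sub_re, Complex.ofReal_re] at h1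
    exact h1.trans hbound
  rw [Complex.nonneg_iff]
  constructor
  · rw [abs_le] at hre; linarith [hre.1]
  · exact him.symm

/-! ### The state extension theorem -/

lemma state_extension (S : StarSubalgebra ℂ A) (hSclosed : IsClosed (S : Set A))
    (φ : A → ℂ) (hφ : IsStateOn S φ) :
    ∃ μ : A → ℂ, IsStateOn ⊤ μ ∧ ∀ x ∈ S, μ x = φ x := by
  classical
  letI : CStarAlgebra (↥S) := StarSubalgebra.cstarAlgebra S (h_closed := hSclosed)
  haveI : Nontrivial (↥S) := by
    refine ⟨⟨1, 0, fun h => ?_⟩⟩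
    have : (1 : A) = 0 := congrArg Subtype.val h
    exact one_ne_zero this
  -- the functional on the subalgebra
  set ℓ₀ : (↥S) →ₗ[ℂ] ℂ :=
    { toFun := fun z => φ z.1
      map_add' := fun a b => hφ.1 a.1 a.2 b.1 b.2
      map_smul' := fun c a => by simpa using hφ.2.1 c a.1 a.2 } with hℓ₀
  have hpos₀ : ∀ z : ↥S, 0 ≤ ℓ₀ (star z * z) := fun z => hφ.2.2.1 z.1 z.2
  have hone₀ : ℓ₀ 1 = 1 := hφ.2.2.2
  have hbd : ∀ z : ↥S, ‖ℓ₀ z‖ ≤ ‖z‖ := state_norm_le ℓ₀ hpos₀ hone₀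
  -- transfer to the submodule, make continuous
  set p : Submodule ℂ A := Subalgebra.toSubmodule S.toSubalgebra with hp
  have hmem : ∀ x : A, x ∈ p ↔ x ∈ S := fun x => Iff.rfl
  set ℓ₁ : (↥p) →ₗ[ℂ] ℂ :=
    { toFun := fun z => φ z.1
      map_add' := fun a b => hφ.1 a.1 a.2 b.1 b.2
      map_smul' := fun c a => by simpa using hφ.2.1 c a.1 a.2 } with hℓ₁
  have hbd₁ : ∀ z : ↥p, ‖ℓ₁ z‖ ≤ 1 * ‖z‖ := by
    intro z
    rw [one_mul]
    exact hbd ⟨z.1, z.2⟩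
  set ℓc : (↥p) →L[ℂ] ℂ := ℓ₁.mkContinuous 1 hbd₁ with hℓc
  obtain ⟨g, hext, hnorm⟩ := exists_extension_norm_eq p ℓc
  have hgnorm : ‖g‖ ≤ 1 := by
    rw [hnorm]
    exact ℓ₁.mkContinuous_norm_le zero_le_one hbd₁
  have h1S : (1 : A) ∈ S := one_mem S
  have hg1 : g 1 = 1 := by
    have := hext ⟨1, h1S⟩
    rw [this]
    exact hφ.2.2.2
  refine ⟨fun x => g x, ⟨fun x _ y _ => map_add g x y,
    fun c x _ => by simpa [smul_eq_mul] using map_smul g c x,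
    fun x _ => cl_pos g hgnorm hg1 x, hg1⟩, fun x hx => hext ⟨x, hx⟩⟩

/-- restriction of a global state -/
lemma isStateOn_restrict (S : StarSubalgebra ℂ A) (μ : A → ℂ)
    (h : IsStateOn (⊤ : StarSubalgebra ℂ A) μ) : IsStateOn S μ :=
  ⟨fun x _ y _ => h.1 x StarSubalgebra.mem_top y StarSubalgebra.mem_top,
   fun c x _ => h.2.1 c x StarSubalgebra.mem_top,
   fun x _ => h.2.2.1 x StarSubalgebra.mem_top, h.2.2.2⟩

end Aux

/-- For a partially-defined L-seminorm `L` on a unital C*-algebra `A`, the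
supremum over all maximal commutative unital C*-subalgebras `S` of the `d_{L,S}`-diameters of
their state spaces equals the `d_L`-diameter of the state space of `A`. -/
theorem stmt18
    (A : Type*) [NormedRing A] [StarRing A] [CStarRing A]
    [NormedAlgebra ℂ A] [StarModule ℂ A] [CompleteSpace A]
    (L : A → ℝ≥0∞)
    (hhom : ∀ (t : ℝ) (f : A), IsSelfAdjoint f → L (t • f) = (‖t‖₊ : ℝ≥0∞) * L f)
    (hsub : ∀ f g : A, IsSelfAdjoint f → IsSelfAdjoint g → L (f + g) ≤ L f + L g)
    (hone : L 1 = 0) :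
    (⨆ S : {S : StarSubalgebra ℂ A // IsMaxCommClosedStarSubalg S},
      ⨆ φ : {φ : A → ℂ // IsStateOn S.1 φ}, ⨆ ψ : {ψ : A → ℂ // IsStateOn S.1 ψ},
        spectralDistOn L S.1 φ.1 ψ.1) =
    (⨆ μ : {μ : A → ℂ // IsStateOn ⊤ μ}, ⨆ ν : {ν : A → ℂ // IsStateOn ⊤ ν},
        spectralDistOn L ⊤ μ.1 ν.1) := by
  classical
  letI : CStarAlgebra A :=
    { ‹NormedRing A›, ‹StarRing A›, ‹CStarRing A›, ‹NormedAlgebra ℂ A›, ‹StarModule ℂ A›,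
      ‹CompleteSpace A› with }
  rcases subsingleton_or_nontrivial A with hsub' | hnt
  · -- trivial algebra: no states at all
    have hempty : ∀ S : StarSubalgebra ℂ A, IsEmpty {φ : A → ℂ // IsStateOn S φ} := by
      intro S
      refine ⟨fun ⟨φ, hφ⟩ => ?_⟩
      have h2 := hφ.1 1 (one_mem S) 1 (one_mem S)
      rw [Subsingleton.elim ((1:A) + 1) (1:A), hφ.2.2.2] at h2
      norm_num at h2
    rw [show (⨆ S : {S : StarSubalgebra ℂ A // IsMaxCommClosedStarSubalg S},
      ⨆ φ : {φ : A → ℂ // IsStateOn S.1 φ}, ⨆ ψ : {ψ : A → ℂ // IsStateOn S.1 ψ},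
        spectralDistOn L S.1 φ.1 ψ.1) = ⊥ from by
      refine iSup_eq_bot.mpr fun S => ?_
      haveI := hempty S.1
      exact iSup_of_empty _]
    rw [show (⨆ μ : {μ : A → ℂ // IsStateOn (⊤ : StarSubalgebra ℂ A) μ},
      ⨆ ν : {ν : A → ℂ // IsStateOn (⊤ : StarSubalgebra ℂ A) ν},
        spectralDistOn L ⊤ μ.1 ν.1) = ⊥ from by
      haveI := hempty (⊤ : StarSubalgebra ℂ A)
      exact iSup_of_empty _]
  · apply le_antisymm
    · refine iSup_le fun S => iSup_le fun φ => iSup_le fun ψ => ?_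
      obtain ⟨μ, hμ, hμe⟩ := state_extension S.1 S.2.1.1 φ.1 φ.2
      obtain ⟨ν, hν, hνe⟩ := state_extension S.1 S.2.1.1 ψ.1 ψ.2
      have step : spectralDistOn L S.1 φ.1 ψ.1 ≤ spectralDistOn L ⊤ μ ν := by
        refine iSup_le fun f => ?_
        have h1 : μ f.1 = φ.1 f.1 := hμe f.1 f.2.1
        have h2 : ν f.1 = ψ.1 f.1 := hνe f.1 f.2.1
        refine le_trans (le_of_eq ?_)
          (le_iSup (fun f' : {f' : A // f' ∈ (⊤ : StarSubalgebra ℂ A) ∧ IsSelfAdjoint f' ∧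
            L f' ≤ 1} => (‖μ f'.1 - ν f'.1‖₊ : ℝ≥0∞))
            ⟨f.1, StarSubalgebra.mem_top, f.2.2⟩)
        rw [h1, h2]
      refine step.trans ?_
      exact le_trans
        (le_iSup (fun ν' : {ν' : A → ℂ // IsStateOn (⊤ : StarSubalgebra ℂ A) ν'} =>
          spectralDistOn L ⊤ μ ν'.1) ⟨ν, hν⟩)
        (le_iSup (fun μ' : {μ' : A → ℂ // IsStateOn (⊤ : StarSubalgebra ℂ A) μ'} =>
          ⨆ ν' : {ν' : A → ℂ // IsStateOn (⊤ : StarSubalgebra ℂ A) ν'},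
            spectralDistOn L ⊤ μ'.1 ν'.1) ⟨μ, hμ⟩)
    · refine iSup_le fun μ => iSup_le fun ν => iSup_le fun f => ?_
      obtain ⟨S, hS, hfS⟩ := exists_maxcomm f.1 f.2.2.1
      have hμr : IsStateOn S μ.1 := isStateOn_restrict S μ.1 μ.2
      have hνr : IsStateOn S ν.1 := isStateOn_restrict S ν.1 ν.2
      have step1 : (‖μ.1 f.1 - ν.1 f.1‖₊ : ℝ≥0∞) ≤ spectralDistOn L S μ.1 ν.1 :=
        le_iSup (fun f' : {f' : A // f' ∈ S ∧ IsSelfAdjoint f' ∧ L f' ≤ 1} =>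
          (‖μ.1 f'.1 - ν.1 f'.1‖₊ : ℝ≥0∞)) ⟨f.1, hfS, f.2.2⟩
      refine step1.trans ?_
      refine le_trans (le_iSup (fun ψ' : {ψ' : A → ℂ // IsStateOn S ψ'} =>
        spectralDistOn L S μ.1 ψ'.1) ⟨ν.1, hνr⟩) ?_
      refine le_trans (le_iSup (fun φ' : {φ' : A → ℂ // IsStateOn S φ'} =>
        ⨆ ψ' : {ψ' : A → ℂ // IsStateOn S ψ'}, spectralDistOn L S φ'.1 ψ'.1) ⟨μ.1, hμr⟩) ?_
      exact le_iSup (fun S' : {S' : StarSubalgebra ℂ A // IsMaxCommClosedStarSubalg S'} =>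
        ⨆ φ' : {φ' : A → ℂ // IsStateOn S'.1 φ'}, ⨆ ψ' : {ψ' : A → ℂ // IsStateOn S'.1 ψ'},
          spectralDistOn L S'.1 φ'.1 ψ'.1) ⟨S, hS⟩
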